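/- arXiv:2209.01234 — 3 statements merged into one kernel-verified Lean document; each statement's English description precedes it below -/
import Mathlib

section
/- Define r_h(m) > 0 by the relation -log(tanh(r_h/2)) = ∫_{ρ_h(m)}^∞ dρ / √(ρ² - 2mρ + (|Λ|/3)ρ⁴), where ρ_h(m) is the unique positive root of m = (ρ/2)(1 + (|Λ|/3)ρ²). Then r_h(m) → ∞ as m → ∞. -/
open Filter MeasureTheory

private lemma tanh_pos_of_pos {x : ℝ} (hx : 0 < x) : 0 < Real.tanh x := by
  rw [Real.tanh_eq_sinh_div_cosh]
  exact div_pos (by rwa [Real.sinh_pos_iff]) (Real.cosh_pos x)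

private lemma tanh_lt_one (x : ℝ) : Real.tanh x < 1 := by
  rw [Real.tanh_eq_sinh_div_cosh, div_lt_one (Real.cosh_pos x)]
  nlinarith [Real.cosh_sub_sinh x, Real.exp_pos (-x)]

private lemma tanh_strictMono : StrictMono Real.tanh := by
  intro x y hxy
  rw [Real.tanh_eq_sinh_div_cosh, Real.tanh_eq_sinh_div_cosh,
    div_lt_div_iff₀ (Real.cosh_pos x) (Real.cosh_pos y)]
  have h : Real.sinh (x - y) < 0 := by rwa [Real.sinh_neg_iff, sub_neg]
  rw [Real.sinh_sub] at h
  linarith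

/-- The antiderivative of the dominating function. -/
private lemma hasDerivAt_G {a c ρ : ℝ} (ha : 0 < a) (hc : 0 < c) (hρ : c < ρ) :
    HasDerivAt (fun ρ : ℝ => (Real.sqrt a * c)⁻¹ * Real.arctan (Real.sqrt (ρ ^ 2 - c ^ 2) / c))
      ((Real.sqrt a * ρ * Real.sqrt (ρ ^ 2 - c ^ 2))⁻¹) ρ := by
  have hρ0 : 0 < ρ := hc.trans hρ
  have hsub : 0 < ρ ^ 2 - c ^ 2 := by nlinarith
  have h1 : HasDerivAt (fun ρ : ℝ => ρ ^ 2 - c ^ 2) (2 * ρ) ρ := by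
    simpa using ((hasDerivAt_pow 2 ρ).sub_const (c ^ 2))
  have h2 : HasDerivAt (fun ρ : ℝ => Real.sqrt (ρ ^ 2 - c ^ 2))
      (2 * ρ / (2 * Real.sqrt (ρ ^ 2 - c ^ 2))) ρ :=
    (Real.hasDerivAt_sqrt hsub.ne').comp ρ h1 |>.congr_deriv (by ring)
  have h3 : HasDerivAt (fun ρ : ℝ => Real.sqrt (ρ ^ 2 - c ^ 2) / c)
      (2 * ρ / (2 * Real.sqrt (ρ ^ 2 - c ^ 2)) / c) ρ := h2.div_const c
  have h4 := (Real.hasDerivAt_arctan (Real.sqrt (ρ ^ 2 - c ^ 2) / c)).comp ρ h3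
  have h5 := h4.const_mul (Real.sqrt a * c)⁻¹
  refine h5.congr_deriv ?_
  have hs : Real.sqrt (ρ ^ 2 - c ^ 2) ^ 2 = ρ ^ 2 - c ^ 2 := Real.sq_sqrt hsub.le
  have hs0 : 0 < Real.sqrt (ρ ^ 2 - c ^ 2) := Real.sqrt_pos.2 hsub
  have hsa : 0 < Real.sqrt a := Real.sqrt_pos.2 ha
  rw [div_pow, hs]
  field_simp
  ring_nf

private lemma integral_bound {a c m : ℝ} (ha : 0 < a) (hc : 0 < c)
    (hm : 2 * m = c * (1 + a * c ^ 2)) :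
    (∫ ρ in Set.Ioi c, 1 / Real.sqrt (ρ ^ 2 - 2 * m * ρ + a * ρ ^ 4)) ≤
      Real.pi / (2 * Real.sqrt a * c) := by
  have hsa : 0 < Real.sqrt a := Real.sqrt_pos.2 ha
  set G : ℝ → ℝ := fun ρ => (Real.sqrt a * c)⁻¹ * Real.arctan (Real.sqrt (ρ ^ 2 - c ^ 2) / c)
  set g : ℝ → ℝ := fun ρ => (Real.sqrt a * ρ * Real.sqrt (ρ ^ 2 - c ^ 2))⁻¹
  have hderiv : ∀ ρ ∈ Set.Ioi c, HasDerivAt G (g ρ) ρ := fun ρ hρ => hasDerivAt_G ha hc hρ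
  have hGcont : ContinuousWithinAt G (Set.Ici c) c := by
    apply Continuous.continuousWithinAt
    exact continuous_const.mul (Real.continuous_arctan.comp
      ((((continuous_pow 2).sub continuous_const).sqrt).div_const c))
  have hgpos : ∀ ρ ∈ Set.Ioi c, 0 ≤ g ρ := fun ρ hρ => by
    have h0 : 0 < ρ := hc.trans hρ
    positivity
  have htop : Tendsto G atTop (nhds ((Real.sqrt a * c)⁻¹ * (Real.pi / 2))) := by
    apply Tendsto.const_mul
    have h1 : Tendsto (fun ρ : ℝ => Real.sqrt (ρ ^ 2 - c ^ 2) / c) atTop atTop := by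
      apply Tendsto.atTop_div_const hc
      have hsq : Tendsto Real.sqrt atTop atTop := by
        rw [tendsto_atTop]
        intro b
        filter_upwards [Filter.eventually_ge_atTop (max (b ^ 2) 0)] with x hx
        have h0 : (0:ℝ) ≤ x := le_trans (le_max_right _ _) hx
        have hb2 : b ^ 2 ≤ x := le_trans (le_max_left _ _) hx
        nlinarith [Real.sq_sqrt h0, Real.sqrt_nonneg x]
      apply hsq.comp
      apply tendsto_atTop_add_const_right
      exact tendsto_pow_atTop (by norm_num)
    exact (Real.tendsto_arctan_atTop.mono_right nhdsWithin_le_nhds).comp h1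
  have hint : IntegrableOn g (Set.Ioi c) :=
    integrableOn_Ioi_deriv_of_nonneg hGcont hderiv hgpos htop
  have hval : (∫ ρ in Set.Ioi c, g ρ) = (Real.sqrt a * c)⁻¹ * (Real.pi / 2) - G c :=
    integral_Ioi_of_hasDerivAt_of_nonneg hGcont hderiv hgpos htop
  have hGc : G c = 0 := by simp [G]
  have hmono : (∫ ρ in Set.Ioi c, 1 / Real.sqrt (ρ ^ 2 - 2 * m * ρ + a * ρ ^ 4)) ≤
      ∫ ρ in Set.Ioi c, g ρ := by
    apply integral_mono_of_nonneg
    · filter_upwards with ρ; positivity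
    · exact hint
    · rw [EventuallyLE, ae_restrict_iff' measurableSet_Ioi]
      filter_upwards with ρ hρ
      rw [Set.mem_Ioi] at hρ
      have hρ0 : 0 < ρ := hc.trans hρ
      have hsub : 0 < ρ ^ 2 - c ^ 2 := by nlinarith
      have hge : a * ρ ^ 2 * (ρ ^ 2 - c ^ 2) ≤ ρ ^ 2 - 2 * m * ρ + a * ρ ^ 4 := by
        have hmρ : 2 * m * ρ = c * (1 + a * c ^ 2) * ρ := by rw [hm]
        have t : 0 < ρ * (ρ - c) := mul_pos hρ0 (sub_pos.2 hρ)
        have s : 0 ≤ a * c ^ 2 * (ρ * (ρ - c)) :=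
          mul_nonneg (mul_nonneg ha.le (sq_nonneg c)) t.le
        nlinarith [hmρ, t, s]
      have hpos : 0 < a * ρ ^ 2 * (ρ ^ 2 - c ^ 2) := by positivity
      have hsq : Real.sqrt (a * ρ ^ 2 * (ρ ^ 2 - c ^ 2)) ≤
          Real.sqrt (ρ ^ 2 - 2 * m * ρ + a * ρ ^ 4) := Real.sqrt_le_sqrt hge
      have heq : Real.sqrt (a * ρ ^ 2 * (ρ ^ 2 - c ^ 2)) =
          Real.sqrt a * ρ * Real.sqrt (ρ ^ 2 - c ^ 2) := by
        rw [Real.sqrt_mul (by positivity), Real.sqrt_mul ha.le,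
          Real.sqrt_sq hρ0.le]
      have h0 : 0 < Real.sqrt (a * ρ ^ 2 * (ρ ^ 2 - c ^ 2)) := Real.sqrt_pos.2 hpos
      simp only [g]
      rw [one_div, ← heq]
      exact inv_anti₀ h0 hsq
  calc (∫ ρ in Set.Ioi c, 1 / Real.sqrt (ρ ^ 2 - 2 * m * ρ + a * ρ ^ 4)) ≤
      ∫ ρ in Set.Ioi c, g ρ := hmono
    _ = Real.pi / (2 * Real.sqrt a * c) := by
        rw [hval, hGc, sub_zero]
        ring

/-- Define `r_h(m) > 0` by `-log(tanh(r_h/2)) = ∫_{ρ_h(m)}^∞ dρ/√(ρ² - 2mρ + (|Λ|/3)ρ⁴)`,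
where `ρ_h(m)` is the unique positive root of `m = (ρ/2)(1 + (|Λ|/3)ρ²)`.
Then `r_h(m) → ∞` as `m → ∞`. -/
theorem conformal_horizon_radius_tendsto_atTop (Λ : ℝ) (hΛ : Λ < 0) (ρh rh : ℝ → ℝ)
    (hρh : ∀ m > (0:ℝ), 0 < ρh m ∧ m = ρh m / 2 * (1 + |Λ| / 3 * (ρh m) ^ 2))
    (hrh : ∀ m > (0:ℝ), 0 < rh m ∧
      -Real.log (Real.tanh (rh m / 2)) =
        ∫ ρ in Set.Ioi (ρh m), 1 / Real.sqrt (ρ ^ 2 - 2 * m * ρ + |Λ| / 3 * ρ ^ 4)) :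
    Tendsto rh atTop atTop := by
  have ha : 0 < |Λ| / 3 := by
    have : 0 < |Λ| := abs_pos.2 hΛ.ne
    linarith
  set a := |Λ| / 3 with ha_def
  have hsa : 0 < Real.sqrt a := Real.sqrt_pos.2 ha
  -- ρh tends to infinity
  have hρtop : Tendsto ρh atTop atTop := by
    rw [tendsto_atTop]
    intro R
    filter_upwards [Filter.eventually_gt_atTop (max 0 ((max R 0) / 2 * (1 + a * (max R 0) ^ 2)))]
      with m hm
    have hm0 : 0 < m := lt_of_le_of_lt (le_max_left _ _) hm
    obtain ⟨hρ0, hρeq⟩ := hρh m hm0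
    by_contra h
    push_neg at h
    have hR0 : ρh m ≤ max R 0 := h.le.trans (le_max_left _ _)
    have hm2 : (max R 0) / 2 * (1 + a * (max R 0) ^ 2) < m :=
      lt_of_le_of_lt (le_max_right _ _) hm
    have h0R : (0:ℝ) ≤ max R 0 := le_max_right _ _
    have h3 : ρh m ^ 3 ≤ (max R 0) ^ 3 := pow_le_pow_left₀ hρ0.le hR0 3
    have h4 : a * ρh m ^ 3 ≤ a * (max R 0) ^ 3 := mul_le_mul_of_nonneg_left h3 ha.le
    nlinarith [h3, h4]
  rw [tendsto_atTop]
  intro C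
  set C' := max C 1 with hC'
  have hC'0 : 0 < C' := lt_of_lt_of_le one_pos (le_max_right _ _)
  set ε := -Real.log (Real.tanh (C' / 2)) with hε_def
  have htpos : 0 < Real.tanh (C' / 2) := tanh_pos_of_pos (by positivity)
  have hεpos : 0 < ε := by
    rw [hε_def, neg_pos]
    exact Real.log_neg htpos (tanh_lt_one _)
  have hbig : ∀ᶠ m in atTop, Real.pi / (2 * Real.sqrt a * ε) ≤ ρh m :=
    hρtop.eventually (Filter.eventually_ge_atTop _)
  filter_upwards [hbig, Filter.eventually_gt_atTop (0:ℝ)] with m hcm hm0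
  obtain ⟨hρ0, hρeq⟩ := hρh m hm0
  obtain ⟨hr0, hreq⟩ := hrh m hm0
  have hmrel : 2 * m = ρh m * (1 + a * (ρh m) ^ 2) := by linear_combination 2 * hρeq
  have hIb : (∫ ρ in Set.Ioi (ρh m), 1 / Real.sqrt (ρ ^ 2 - 2 * m * ρ + a * ρ ^ 4)) ≤
      Real.pi / (2 * Real.sqrt a * ρh m) := integral_bound ha hρ0 hmrel
  have hεb : Real.pi / (2 * Real.sqrt a * ρh m) ≤ ε := by
    have hρp : (0:ℝ) < 2 * Real.sqrt a * ρh m := by positivity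
    rw [div_le_iff₀ hρp]
    rw [div_le_iff₀ (by positivity : (0:ℝ) < 2 * Real.sqrt a * ε)] at hcm
    nlinarith [hcm]
  have hkey : -Real.log (Real.tanh (rh m / 2)) ≤ ε := by
    rw [hreq]; exact hIb.trans hεb
  -- conclude C ≤ rh m
  by_contra hcon
  push_neg at hcon
  have h1 : rh m / 2 < C' / 2 := by
    have : rh m < C' := lt_of_lt_of_le hcon (le_max_left _ _)
    linarith
  have h2 : Real.tanh (rh m / 2) < Real.tanh (C' / 2) := tanh_strictMono h1
  have h3 : Real.log (Real.tanh (rh m / 2)) < Real.log (Real.tanh (C' / 2)) :=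
    Real.log_lt_log (tanh_pos_of_pos (by positivity)) h2
  rw [hε_def] at hkey
  linarith
end

section
/- For fixed Λ < 0, after the substitution ρ̄ = ρ m^{-1/3}, one has m^{-1/3} ∫_{ρ_h m^{-1/3}}^∞ dρ̄ / √(m^{-2/3}ρ̄² - 2ρ̄ + (|Λ|/3)ρ̄⁴) → 0 as m → ∞, where ρ_h = ρ_h(m) is the horizon radius; consequently ∫_{ρ_h(m)}^∞ dρ / √(ρ² - 2mρ + (|Λ|/3)ρ⁴) → 0 as m → ∞. -/
open Filter MeasureTheory

open Set

section aux

lemma key_ineq' (L s t x : ℝ) (hL : 0 < L) (hs : 0 < s) (hrel : s*t^2/2 + L/6*s^3 = 1)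
    (hst : s*t^2 < 2) (hx : s ≤ x) : x - s ≤ t^2*x^2 - 2*x + L/3*x^4 := by
  have hxpos : 0 < x := lt_of_lt_of_le hs hx
  nlinarith [sq_nonneg (x - s),
    mul_nonneg (mul_nonneg hL.le (sq_nonneg (x - s)))
      (by nlinarith [sq_nonneg x, sq_nonneg s, mul_pos hxpos hs] : (0:ℝ) ≤ x^2 + 2*x*s + 3*s^2),
    sq_nonneg (t*(x-s)), mul_nonneg (sub_nonneg.mpr hx) (sub_nonneg.mpr (le_of_lt hst))]

end aux
lemma integral_bound_s3 (L s t : ℝ) (hL : 0 < L) (hs : 0 < s) (ht : 0 < t)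
    (hrel : s*t^2/2 + L/6*s^3 = 1) (hst : s*t^2 < 2) :
    ∫ x in Ioi s, 1 / Real.sqrt (t^2*x^2 - 2*x + L/3*x^4) ≤
      2 * Real.sqrt ((12/L) ^ ((1:ℝ)/3)) +
        Real.sqrt (6/L) * ((12/L) ^ ((1:ℝ)/3))⁻¹ := by
  set c : ℝ := (12/L) ^ ((1:ℝ)/3) with hc_def
  have hc : 0 < c := Real.rpow_pos_of_pos (by positivity) _
  have hc3 : c ^ 3 = 12 / L := by
    rw [hc_def, ← Real.rpow_natCast ((12/L) ^ ((1:ℝ)/3)) 3, ← Real.rpow_mul (by positivity)]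
    norm_num
  have hsc : s < c := by
    have hL6 : L * s ^ 3 ≤ 6 := by nlinarith [mul_nonneg hs.le (sq_nonneg t)]
    have h1 : s ^ 3 < c ^ 3 := by
      rw [hc3, lt_div_iff₀ hL]; nlinarith
    exact lt_of_pow_lt_pow_left₀ 3 hc.le h1
  have hquart : ∀ x : ℝ, c ≤ x → L/6*x^4 ≤ t^2*x^2 - 2*x + L/3*x^4 := by
    intro x hx
    have hxpos : 0 < x := lt_of_lt_of_le hc hx
    have h1 : c ^ 3 ≤ x ^ 3 := pow_le_pow_left₀ hc.le hx 3
    have h3 : L/6*x*(c^3) ≤ L/6*x*(x^3) := mul_le_mul_of_nonneg_left h1 (by positivity)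
    rw [hc3] at h3
    have e : L/6*x*(12/L) = 2*x := by field_simp; ring
    nlinarith [mul_nonneg (sq_nonneg t) (sq_nonneg x)]
  set ψ : ℝ → ℝ := fun x => if x ≤ c then 1 / Real.sqrt (x - s) else Real.sqrt (6/L) * (1/x^2)
    with hψ_def
  -- pointwise bound
  have hφψ : ∀ x ∈ Ioi s, 1 / Real.sqrt (t^2*x^2 - 2*x + L/3*x^4) ≤ ψ x := by
    intro x hx
    rw [mem_Ioi] at hx
    by_cases hxc : x ≤ c
    · rw [hψ_def]; simp only [if_pos hxc]
      exact one_div_le_one_div_of_le (Real.sqrt_pos.mpr (sub_pos.mpr hx))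
        (Real.sqrt_le_sqrt (key_ineq' L s t x hL hs hrel hst hx.le))
    · rw [hψ_def]; simp only [if_neg hxc]
      push_neg at hxc
      have hxpos : 0 < x := lt_trans hc hxc
      have h1 : (0:ℝ) < L/6*x^4 := by positivity
      have h2 : 1 / Real.sqrt (t^2*x^2 - 2*x + L/3*x^4) ≤ 1 / Real.sqrt (L/6*x^4) :=
        one_div_le_one_div_of_le (Real.sqrt_pos.mpr h1) (Real.sqrt_le_sqrt (hquart x hxc.le))
      refine h2.trans_eq ?_
      have h3 : Real.sqrt (L/6*x^4) = Real.sqrt (L/6) * x^2 := by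
        rw [Real.sqrt_mul (by positivity), show x^4 = (x^2)^2 by ring,
          Real.sqrt_sq (sq_nonneg x)]
      rw [h3]
      have h4 : Real.sqrt (6/L) = (Real.sqrt (L/6))⁻¹ := by
        rw [← Real.sqrt_inv]; congr 1; field_simp
      have h5 : (0:ℝ) < Real.sqrt (L/6) := Real.sqrt_pos.mpr (by positivity)
      rw [h4]; field_simp
  -- integrability pieces
  have hint1 : IntegrableOn (fun x : ℝ => (x - s) ^ (-(1/2) : ℝ)) (Ioc s c) := by
    have h0 : IntervalIntegrable (fun x : ℝ => x ^ (-(1/2) : ℝ)) volume 0 (c - s) :=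
      intervalIntegral.intervalIntegrable_rpow' (by norm_num)
    have h1 := h0.comp_sub_right s
    rw [zero_add, sub_add_cancel] at h1
    exact (intervalIntegrable_iff_integrableOn_Ioc_of_le hsc.le).mp h1
  have heq1 : EqOn (fun x : ℝ => (x - s) ^ (-(1/2) : ℝ)) (fun x => 1 / Real.sqrt (x - s))
      (Ioc s c) := by
    intro x hx
    have : (0:ℝ) < x - s := sub_pos.mpr hx.1
    simp only
    rw [Real.rpow_neg this.le, Real.sqrt_eq_rpow]
    exact (one_div _).symm
  have hint1' : IntegrableOn (fun x : ℝ => 1 / Real.sqrt (x - s)) (Ioc s c) :=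
    hint1.congr_fun heq1 measurableSet_Ioc
  have hint2 : IntegrableOn (fun x : ℝ => x ^ (-2 : ℝ)) (Ioi c) :=
    integrableOn_Ioi_rpow_of_lt (by norm_num) hc
  have heq2 : EqOn (fun x : ℝ => Real.sqrt (6/L) * x ^ (-2 : ℝ))
      (fun x => Real.sqrt (6/L) * (1/x^2)) (Ioi c) := by
    intro x hx
    have hxpos : 0 < x := lt_trans hc hx
    simp only
    rw [Real.rpow_neg hxpos.le, show ((2:ℝ)) = ((2:ℕ):ℝ) by norm_num, Real.rpow_natCast, one_div]
  have hint2a : IntegrableOn (fun x : ℝ => Real.sqrt (6/L) * x ^ (-2:ℝ)) (Ioi c) :=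
    hint2.const_mul _
  have hint2' : IntegrableOn (fun x : ℝ => Real.sqrt (6/L) * (1/x^2)) (Ioi c) :=
    hint2a.congr_fun heq2 measurableSet_Ioi
  have hψint1 : IntegrableOn ψ (Ioc s c) :=
    hint1'.congr_fun (fun x hx => by rw [hψ_def]; simp only [if_pos hx.2]) measurableSet_Ioc
  have hψint2 : IntegrableOn ψ (Ioi c) :=
    hint2'.congr_fun (fun x hx => by rw [hψ_def]; simp only [if_neg (not_le.mpr (show c < x from hx))])
      measurableSet_Ioi
  have hunion : Ioc s c ∪ Ioi c = Ioi s := Ioc_union_Ioi_eq_Ioi hsc.le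
  have hψint : IntegrableOn ψ (Ioi s) := by rw [← hunion]; exact hψint1.union hψint2
  -- monotonicity
  have hmono : ∫ x in Ioi s, 1 / Real.sqrt (t^2*x^2 - 2*x + L/3*x^4) ≤ ∫ x in Ioi s, ψ x := by
    refine integral_mono_of_nonneg (ae_of_all _ fun x => ?_) hψint ?_
    · exact one_div_nonneg.mpr (Real.sqrt_nonneg _)
    · exact (ae_restrict_iff' measurableSet_Ioi).mpr (ae_of_all _ hφψ)
  refine hmono.trans ?_
  -- split the integral
  have hsplit : ∫ x in Ioi s, ψ x = (∫ x in Ioc s c, ψ x) + ∫ x in Ioi c, ψ x := by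
    rw [← hunion, setIntegral_union (Ioc_disjoint_Ioi le_rfl) measurableSet_Ioi hψint1 hψint2]
  rw [hsplit]
  have hInt1 : ∫ x in Ioc s c, ψ x ≤ 2 * Real.sqrt c := by
    have e1 : ∫ x in Ioc s c, ψ x = ∫ x in Ioc s c, (x - s) ^ (-(1/2) : ℝ) := by
      refine setIntegral_congr_fun measurableSet_Ioc fun x hx => ?_
      rw [hψ_def]; simp only [if_pos hx.2]
      exact (heq1 hx).symm
    have ecs := intervalIntegral.integral_comp_sub_right (a := s) (b := c)
      (fun y : ℝ => y ^ (-(1/2):ℝ)) s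
    rw [e1, ← intervalIntegral.integral_of_le hsc.le, ecs,
      integral_rpow (Or.inl (by norm_num)), sub_self, Real.zero_rpow (by norm_num)]
    have : (c - s) ^ (-(1/2) + 1 : ℝ) = Real.sqrt (c - s) := by
      rw [Real.sqrt_eq_rpow]; norm_num
    rw [this]
    have h2 : Real.sqrt (c - s) ≤ Real.sqrt c := Real.sqrt_le_sqrt (by linarith)
    norm_num
    linarith
  have hInt2 : ∫ x in Ioi c, ψ x = Real.sqrt (6/L) * c⁻¹ := by
    have e2 : ∫ x in Ioi c, ψ x = ∫ x in Ioi c, Real.sqrt (6/L) * x ^ (-2:ℝ) := by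
      refine setIntegral_congr_fun measurableSet_Ioi fun x hx => ?_
      rw [hψ_def]; simp only [if_neg (not_le.mpr (show c < x from hx))]
      exact (heq2 hx).symm
    rw [e2, integral_const_mul, integral_Ioi_rpow_of_lt (by norm_num) hc,
      show (-2+1 : ℝ) = -1 by norm_num, Real.rpow_neg_one]
    ring
  rw [hInt2]
  exact add_le_add hInt1 le_rfl

lemma rescale_facts (L m : ℝ) (hL : 0 < L) (hm : 0 < m) (ρ : ℝ) (hρ : 0 < ρ)
    (hm2 : m = ρ / 2 * (1 + L / 3 * ρ ^ 2)) :
    0 < ρ * m ^ (-(1:ℝ)/3) ∧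
    (ρ * m ^ (-(1:ℝ)/3)) * (m ^ (-(1:ℝ)/3))^2/2 + L/6*(ρ * m ^ (-(1:ℝ)/3))^3 = 1 ∧
    (ρ * m ^ (-(1:ℝ)/3)) * (m ^ (-(1:ℝ)/3))^2 < 2 := by
  set t : ℝ := m ^ (-(1:ℝ)/3) with ht_def
  have htpos : 0 < t := Real.rpow_pos_of_pos hm _
  have ht3 : t ^ 3 = m⁻¹ := by
    rw [ht_def, ← Real.rpow_natCast (m ^ (-(1:ℝ)/3)) 3, ← Real.rpow_mul hm.le]
    norm_num [Real.rpow_neg_one]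
  refine ⟨mul_pos hρ htpos, ?_, ?_⟩
  · have e1 : (ρ * t) * t^2/2 + L/6*(ρ * t)^3 = (ρ/2 + L/6*ρ^3) * t^3 := by ring
    have e2 : ρ/2 + L/6*ρ^3 = m := by rw [hm2]; ring
    rw [e1, e2, ht3, mul_inv_cancel₀ hm.ne']
  · have e1 : (ρ * t) * t^2 = ρ * t^3 := by ring
    rw [e1, ht3, ← div_eq_mul_inv, div_lt_iff₀ hm]
    nlinarith [pow_pos hρ 3]

lemma first_tendsto (Λ : ℝ) (hΛ : Λ < 0) (ρh : ℝ → ℝ)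
    (hρh : ∀ m > (0:ℝ), 0 < ρh m ∧ m = ρh m / 2 * (1 + |Λ| / 3 * (ρh m) ^ 2)) :
    Tendsto (fun m : ℝ => m ^ (-(1:ℝ)/3) *
        ∫ x in Set.Ioi (ρh m * m ^ (-(1:ℝ)/3)),
          1 / Real.sqrt (m ^ (-(2:ℝ)/3) * x ^ 2 - 2 * x + |Λ| / 3 * x ^ 4))
      atTop (nhds 0) := by
  have hL : 0 < |Λ| := abs_pos.mpr hΛ.ne
  set L : ℝ := |Λ|
  set C : ℝ := 2 * Real.sqrt ((12/L) ^ ((1:ℝ)/3)) + Real.sqrt (6/L) * ((12/L) ^ ((1:ℝ)/3))⁻¹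
    with hC_def
  have hCt : Tendsto (fun m : ℝ => C * m ^ (-(1:ℝ)/3)) atTop (nhds 0) := by
    have h := (tendsto_rpow_neg_atTop (show (0:ℝ) < 1/3 by norm_num)).const_mul C
    rw [mul_zero] at h
    refine h.congr fun x => ?_
    norm_num
  refine tendsto_of_tendsto_of_tendsto_of_le_of_le' tendsto_const_nhds hCt ?_ ?_
  · filter_upwards [eventually_gt_atTop 0] with m hm
    have h1 : (0:ℝ) ≤ m ^ (-(1:ℝ)/3) := (Real.rpow_pos_of_pos hm _).le
    exact mul_nonneg h1 (integral_nonneg fun x => one_div_nonneg.mpr (Real.sqrt_nonneg _))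
  · filter_upwards [eventually_gt_atTop 0] with m hm
    obtain ⟨hρ, hm2⟩ := hρh m hm
    set t : ℝ := m ^ (-(1:ℝ)/3) with ht_def
    have htpos : 0 < t := Real.rpow_pos_of_pos hm _
    have ht2 : m ^ (-(2:ℝ)/3) = t^2 := by
      rw [ht_def, ← Real.rpow_natCast (m ^ (-(1:ℝ)/3)) 2, ← Real.rpow_mul hm.le]
      norm_num
    obtain ⟨hs, hrel, hst⟩ := rescale_facts L m hL hm (ρh m) hρ hm2
    have hb := integral_bound_s3 L (ρh m * t) t hL hs htpos hrel hst
    calc m ^ (-(1:ℝ)/3) * ∫ x in Set.Ioi (ρh m * t),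
            1 / Real.sqrt (m ^ (-(2:ℝ)/3) * x ^ 2 - 2 * x + L / 3 * x ^ 4)
        = t * ∫ x in Set.Ioi (ρh m * t),
            1 / Real.sqrt (t^2 * x ^ 2 - 2 * x + L / 3 * x ^ 4) := by rw [← ht_def, ht2]
      _ ≤ t * C := by
          exact mul_le_mul_of_nonneg_left hb htpos.le
      _ = C * t := mul_comm _ _


/-- For fixed `Λ < 0`, after the substitution `ρ̄ = ρ m^{-1/3}` the rescaled horizon
integral tends to `0` as `m → ∞`; consequently
`∫_{ρ_h(m)}^∞ dρ/√(ρ² - 2mρ + (|Λ|/3)ρ⁴) → 0` as `m → ∞`. -/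
theorem rescaled_horizon_integral_tendsto_zero (Λ : ℝ) (hΛ : Λ < 0) (ρh : ℝ → ℝ)
    (hρh : ∀ m > (0:ℝ), 0 < ρh m ∧ m = ρh m / 2 * (1 + |Λ| / 3 * (ρh m) ^ 2)) :
    Tendsto (fun m : ℝ => m ^ (-(1:ℝ)/3) *
        ∫ x in Set.Ioi (ρh m * m ^ (-(1:ℝ)/3)),
          1 / Real.sqrt (m ^ (-(2:ℝ)/3) * x ^ 2 - 2 * x + |Λ| / 3 * x ^ 4))
      atTop (nhds 0) ∧
    Tendsto (fun m : ℝ =>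
        ∫ ρ in Set.Ioi (ρh m), 1 / Real.sqrt (ρ ^ 2 - 2 * m * ρ + |Λ| / 3 * ρ ^ 4))
      atTop (nhds 0) := by
  have hL : 0 < |Λ| := abs_pos.mpr hΛ.ne
  set L : ℝ := |Λ|
  have h1 := first_tendsto Λ hΛ ρh hρh
  refine ⟨h1, h1.congr' ?_⟩
  filter_upwards [eventually_gt_atTop 0] with m hm
  obtain ⟨hρ, hm2⟩ := hρh m hm
  set t : ℝ := m ^ (-(1:ℝ)/3) with ht_def
  have htpos : 0 < t := Real.rpow_pos_of_pos hm _
  have ht3 : t ^ 3 = m⁻¹ := by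
    rw [ht_def, ← Real.rpow_natCast (m ^ (-(1:ℝ)/3)) 3, ← Real.rpow_mul hm.le]
    norm_num [Real.rpow_neg_one]
  have ht2 : m ^ (-(2:ℝ)/3) = t^2 := by
    rw [ht_def, ← Real.rpow_natCast (m ^ (-(1:ℝ)/3)) 2, ← Real.rpow_mul hm.le]
    norm_num
  have htm : t^4 * m = t := by
    have : t^4 = t * t^3 := by ring
    rw [this, ht3]
    field_simp
  -- pointwise identity
  have hpt : ∀ ρ : ℝ, 1 / Real.sqrt (ρ^2 - 2*m*ρ + L/3*ρ^4)
      = t^2 * (1 / Real.sqrt (t^2*(t*ρ)^2 - 2*(t*ρ) + L/3*(t*ρ)^4)) := by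
    intro ρ
    have hrad : t^2*(t*ρ)^2 - 2*(t*ρ) + L/3*(t*ρ)^4 = t^4 * (ρ^2 - 2*m*ρ + L/3*ρ^4) := by
      linear_combination (2*ρ) * htm
    rw [hrad, Real.sqrt_mul (by positivity : (0:ℝ) ≤ t^4),
      show t^4 = (t^2)^2 by ring, Real.sqrt_sq (sq_nonneg t)]
    have haux : ∀ y : ℝ, t^2 * (1 / (t^2 * y)) = 1/y := by
      intro y
      rcases eq_or_ne y 0 with rfl | hy
      · simp
      · have ht2ne : (t:ℝ)^2 ≠ 0 := pow_ne_zero 2 htpos.ne'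
        field_simp
    rw [haux]
  have key := integral_comp_mul_left_Ioi
    (fun x => 1 / Real.sqrt (t^2*x^2 - 2*x + L/3*x^4)) (ρh m) htpos
  simp only [smul_eq_mul] at key
  calc (fun m : ℝ => m ^ (-(1:ℝ)/3) *
        ∫ x in Set.Ioi (ρh m * m ^ (-(1:ℝ)/3)),
          1 / Real.sqrt (m ^ (-(2:ℝ)/3) * x ^ 2 - 2 * x + L / 3 * x ^ 4)) m
      = t * ∫ x in Set.Ioi (t * ρh m),
          1 / Real.sqrt (t^2 * x ^ 2 - 2 * x + L / 3 * x ^ 4) := by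
        simp only [← ht_def, ht2, mul_comm (ρh m) t]
    _ = t^2 * ∫ x in Set.Ioi (ρh m),
          1 / Real.sqrt (t^2*(t*x)^2 - 2*(t*x) + L/3*(t*x)^4) := by
        rw [key]
        rw [← mul_assoc]
        congr 1
        field_simp
    _ = ∫ x in Set.Ioi (ρh m), 1 / Real.sqrt (x^2 - 2*m*x + L/3*x^4) := by
        rw [← integral_const_mul]
        exact setIntegral_congr_fun measurableSet_Ioi fun x _ => (hpt x).symm
end

section
/- Let u ∈ H¹(M) on a Riemannian manifold with boundary satisfy ∫_M (|∇u|² + |Λ| u²) dV = (α/4) ∫_{∂M} h u² dσ with α ∈ [0,1] and Λ ≠ 0, and suppose the trace inequality ∫_{∂M} u² dσ ≤ C⁻¹ ∫_M (|∇u|² + u²) dV holds for some C > 0. If max_{∂M} h < 4C·min{1,|Λ|}, then u = 0. -/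
open MeasureTheory

/-- Triviality of the kernel: if `u ∈ H¹(M)` satisfies the integration-by-parts
identity `∫(|∇u|² + |Λ|u²)dV = (α/4)∫_{∂M} h u² dσ` with `α ∈ [0,1]`, the trace
inequality `∫_{∂M} u² dσ ≤ C⁻¹ ∫(|∇u|² + u²)dV` holds, and
`max_{∂M} h < 4C min{1,|Λ|}`, then `u = 0` (a.e.). -/
theorem kernel_trivial {X : Type*} [MeasurableSpace X] (μ σ : Measure X)
    (u gradsq h : X → ℝ) (lam C hmax a : ℝ)
    (hgrad : ∀ x, 0 ≤ gradsq x) (hlam : 0 < lam) (hC : 0 < C)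
    (ha : a ∈ Set.Icc (0:ℝ) 1)
    (hintg : Integrable gradsq μ)
    (hintu : Integrable (fun x => (u x) ^ 2) μ)
    (hid : ∫ x, gradsq x ∂μ + lam * ∫ x, (u x) ^ 2 ∂μ
            = a / 4 * ∫ x, h x * (u x) ^ 2 ∂σ)
    (hBh0 : 0 ≤ ∫ x, h x * (u x) ^ 2 ∂σ)
    (hBh : ∫ x, h x * (u x) ^ 2 ∂σ ≤ hmax * ∫ x, (u x) ^ 2 ∂σ)
    (hBu : 0 ≤ ∫ x, (u x) ^ 2 ∂σ)
    (htrace : ∫ x, (u x) ^ 2 ∂σ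
            ≤ C⁻¹ * (∫ x, gradsq x ∂μ + ∫ x, (u x) ^ 2 ∂μ))
    (hh : hmax < 4 * C * min 1 lam) :
    u =ᵐ[μ] 0 := by
  obtain ⟨ha0, ha1⟩ := ha
  set G := ∫ x, gradsq x ∂μ with hGdef
  set U := ∫ x, (u x) ^ 2 ∂μ with hUdef
  set B := ∫ x, (u x) ^ 2 ∂σ with hBdef
  set H := ∫ x, h x * (u x) ^ 2 ∂σ with hHdef
  have hG0 : 0 ≤ G := integral_nonneg hgrad
  have hU0 : 0 ≤ U := integral_nonneg fun x => sq_nonneg _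
  set m := min 1 lam with hm
  have hm0 : 0 < m := lt_min one_pos hlam
  have hm1 : m ≤ 1 := min_le_left _ _
  have hmlam : m ≤ lam := min_le_right _ _
  have hCB : C * B ≤ G + U := by
    nlinarith [htrace, mul_le_mul_of_nonneg_left htrace hC.le, mul_inv_cancel₀ hC.ne']
  have key : m * (C * B) ≤ 1 / 4 * (hmax * B) := by
    calc m * (C * B) ≤ m * (G + U) := by nlinarith
      _ ≤ G + lam * U := by nlinarith
      _ = a / 4 * H := hid
      _ ≤ 1 / 4 * H := by nlinarith
      _ ≤ 1 / 4 * (hmax * B) := by linarith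
  have hB : B = 0 := by nlinarith
  have hH : H = 0 := le_antisymm (by rw [hB] at hBh; linarith) hBh0
  have hU : U = 0 := by nlinarith [hid]
  have h2 : (fun x => (u x) ^ 2) =ᵐ[μ] 0 :=
    (integral_eq_zero_iff_of_nonneg (fun x => sq_nonneg _) hintu).mp hU
  filter_upwards [h2] with x hx
  have : (u x) ^ 2 = 0 := hx
  simpa using pow_eq_zero_iff (n := 2) (by norm_num) |>.mp this
end
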